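/- Let m ≥ 2, a ∈ [0,1], Σ = (1−a)·I + a·J (I the identity, J the all-ones matrix), and U = {ξ ∈ ℝ^m_+ : ξᵀ Σ ξ ≤ 1}. Define: if a ≤ m^{−2/3}, μ = 1/(2·((1−a)³m + (1−a)²am²)^{1/4}), ρ = 1/(4(1−a)μ), and β = √((1/2)·(1 + (1/(1−a))·(am + √((1−a)m + am²)))); if a > m^{−2/3}, μ = 0, ρ = 1/√a, and β = 1/√a. Let v_0 = μ·e and v_i = v_0 + ρ·e_i. Then in both cases: (i) for every ξ ∈ U, Σ_{i=1}^m (ξ_i − μ)_+ ≤ ρ, so Û = conv(v_0,…,v_m) dominates U; and (ii) ρ² + 2(1−a+am)ρμ + (am² + (1−a)m)μ² ≤ β², so (1/β)·v_i ∈ U for every i ∈ {0,…,m}. -/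

import Mathlib

open Matrix


lemma quadForm {m : ℕ} (a : ℝ) (ξ : Fin m → ℝ) :
    ξ ⬝ᵥ ((1 - a) • (1 : Matrix (Fin m) (Fin m) ℝ) + a • (Matrix.of fun _ _ => (1 : ℝ))).mulVec ξ
      = (1 - a) * (∑ i, ξ i ^ 2) + a * (∑ i, ξ i) ^ 2 := by
  have hv : ∀ j, (((1 - a) • (1 : Matrix (Fin m) (Fin m) ℝ)
      + a • (Matrix.of fun _ _ => (1 : ℝ))).mulVec ξ) j = (1 - a) * ξ j + a * ∑ i, ξ i := by
    intro j
    simp [Matrix.mulVec, dotProduct, Matrix.one_apply, mul_ite, ite_mul, add_mul,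
      Finset.sum_ite_eq, Finset.sum_add_distrib, Finset.mul_sum]
  simp only [dotProduct, hv, mul_add, Finset.sum_add_distrib, sq, Finset.sum_mul,
    Finset.mul_sum]
  congr 1
  · exact Finset.sum_congr rfl fun i _ => by ring
  · exact Finset.sum_congr rfl fun i _ => Finset.sum_congr rfl fun j _ => by ring

lemma div_trick {β : ℝ} (hβ : 0 < β) {X : ℝ} (hX : X ≤ β ^ 2) : β⁻¹ ^ 2 * X ≤ 1 := by
  have h1 : β⁻¹ ^ 2 * X ≤ β⁻¹ ^ 2 * β ^ 2 := by
    apply mul_le_mul_of_nonneg_left hX (by positivity)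
  have h2 : β⁻¹ ^ 2 * β ^ 2 = 1 := by field_simp
  linarith

theorem stmt14_aux {m : ℕ} (a : ℝ) (ha0 : 0 ≤ a) (ha1 : a ≤ 1)
    (μ ρ β : ℝ) (hμ : 0 ≤ μ) (hρ : 0 < ρ) (hβ : 0 < β)
    (h1 : ∀ ξ : Fin m → ℝ, (∀ i, 0 ≤ ξ i) →
      (1 - a) * (∑ i, ξ i ^ 2) + a * (∑ i, ξ i) ^ 2 ≤ 1 →
      (∑ i, max (ξ i - μ) 0) ≤ ρ)
    (h3 : ρ ^ 2 + 2 * (1 - a + a * (m : ℝ)) * ρ * μ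
        + (a * (m : ℝ) ^ 2 + (1 - a) * (m : ℝ)) * μ ^ 2 ≤ β ^ 2) :
    (∀ ξ ∈ {ξ : Fin m → ℝ | (∀ i, 0 ≤ ξ i) ∧
        ξ ⬝ᵥ ((1 - a) • (1 : Matrix (Fin m) (Fin m) ℝ)
          + a • (Matrix.of fun _ _ => (1 : ℝ))).mulVec ξ ≤ 1},
      (∑ i, max (ξ i - μ) 0) ≤ ρ) ∧
    (∀ ξ ∈ {ξ : Fin m → ℝ | (∀ i, 0 ≤ ξ i) ∧
        ξ ⬝ᵥ ((1 - a) • (1 : Matrix (Fin m) (Fin m) ℝ)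
          + a • (Matrix.of fun _ _ => (1 : ℝ))).mulVec ξ ≤ 1},
      (∀ i, ξ i ≤ (fun ξ i => max (ξ i - μ) 0 + μ) ξ i) ∧
      (fun ξ i => max (ξ i - μ) 0 + μ) ξ ∈ convexHull ℝ (Set.range
        (fun o : Option (Fin m) => o.elim (fun _ => μ)
          (fun i => (fun _ => μ) + ρ • (Pi.single i (1 : ℝ) : Fin m → ℝ))))) ∧
    (ρ ^ 2 + 2 * (1 - a + a * (m : ℝ)) * ρ * μ
        + (a * (m : ℝ) ^ 2 + (1 - a) * (m : ℝ)) * μ ^ 2 ≤ β ^ 2) ∧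
    (∀ i : Option (Fin m), β⁻¹ • (fun o : Option (Fin m) => o.elim (fun _ => μ)
        (fun i => (fun _ => μ) + ρ • (Pi.single i (1 : ℝ) : Fin m → ℝ))) i ∈
      {ξ : Fin m → ℝ | (∀ i, 0 ≤ ξ i) ∧
        ξ ⬝ᵥ ((1 - a) • (1 : Matrix (Fin m) (Fin m) ℝ)
          + a • (Matrix.of fun _ _ => (1 : ℝ))).mulVec ξ ≤ 1}) := by
  have hQ : ∀ ξ ∈ {ξ : Fin m → ℝ | (∀ i, 0 ≤ ξ i) ∧
        ξ ⬝ᵥ ((1 - a) • (1 : Matrix (Fin m) (Fin m) ℝ)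
          + a • (Matrix.of fun _ _ => (1 : ℝ))).mulVec ξ ≤ 1},
      (∑ i, max (ξ i - μ) 0) ≤ ρ := by
    intro ξ hξ
    exact h1 ξ hξ.1 (by rw [← quadForm]; exact hξ.2)
  refine ⟨hQ, ?_, h3, ?_⟩
  · -- part (ii) first half
    intro ξ hξ
    constructor
    · intro i
      have := le_max_left (ξ i - μ) 0
      simp only
      linarith
    · -- convex hull membership
      set v : Option (Fin m) → Fin m → ℝ := fun o : Option (Fin m) => o.elim (fun _ => μ)
          (fun i => (fun _ => μ) + ρ • (Pi.single i (1 : ℝ) : Fin m → ℝ)) with hv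
      set w : Fin m → ℝ := fun i => max (ξ i - μ) 0 with hw
      have hw0 : ∀ i, 0 ≤ w i := fun i => le_max_right _ _
      have hwsum : (∑ i, w i) ≤ ρ := hQ ξ hξ
      set W : Option (Fin m) → ℝ := fun o => o.elim (1 - (∑ i, w i) / ρ) (fun i => w i / ρ)
        with hW
      have hW0 : ∀ o ∈ Finset.univ, 0 ≤ W o := by
        rintro (_ | i) -
        · simp only [hW, Option.elim]
          have : (∑ i, w i) / ρ ≤ 1 := by
            rw [div_le_one hρ]; exact hwsum
          linarith
        · exact div_nonneg (hw0 i) hρ.le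
      have hW1 : ∑ o, W o = 1 := by
        rw [Fintype.sum_option]
        simp only [hW, Option.elim]
        rw [← Finset.sum_div]
        field_simp
        ring
      have hmem : ∀ o ∈ Finset.univ, v o ∈ convexHull ℝ (Set.range v) :=
        fun o _ => subset_convexHull ℝ _ ⟨o, rfl⟩
      have hconv := (convex_convexHull ℝ (Set.range v)).sum_mem hW0 hW1 hmem
      convert hconv using 1
      funext j
      rw [Finset.sum_apply]
      rw [Fintype.sum_option]
      simp only [hW, hv, Option.elim, Pi.smul_apply, Pi.add_apply, Pi.single_apply,
        smul_eq_mul, mul_ite, mul_one, mul_zero, mul_add]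
      rw [Finset.sum_add_distrib, Finset.sum_ite_eq]
      simp only [Finset.mem_univ, if_true]
      have : ∑ i, w i / ρ * μ = (∑ i, w i) * μ / ρ := by
        rw [Finset.sum_mul, Finset.sum_div]
        exact Finset.sum_congr rfl fun i _ => by ring
      rw [this]
      field_simp
      ring
  · -- part (iv)
    rintro (_ | i) <;> constructor
    · intro j
      simp only [Option.elim, Pi.smul_apply, smul_eq_mul]
      positivity
    · simp only [Option.elim, Set.mem_setOf_eq]
      rw [quadForm]
      have hsum : ∑ j : Fin m, (β⁻¹ • fun _ : Fin m => μ) j = (m : ℝ) * (β⁻¹ * μ) := by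
        simp [Finset.sum_const, mul_comm]
      have hsumsq : ∑ j : Fin m, ((β⁻¹ • fun _ : Fin m => μ) j) ^ 2
          = (m : ℝ) * (β⁻¹ * μ) ^ 2 := by
        simp [Finset.sum_const, mul_comm]
      rw [hsum, hsumsq]
      have hX : (1 - a) * ((m:ℝ) * μ ^ 2) + a * ((m:ℝ) * μ) ^ 2 ≤ β ^ 2 := by
        have hρμ : 0 ≤ 2 * (1 - a + a * (m:ℝ)) * ρ * μ := by
          have : (0:ℝ) ≤ 1 - a + a * m := by
            have : (0:ℝ) ≤ a * m := by positivity
            linarith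
          positivity
        nlinarith [sq_nonneg ρ]
      have key := div_trick hβ hX
      calc (1 - a) * ((m:ℝ) * (β⁻¹ * μ) ^ 2) + a * ((m:ℝ) * (β⁻¹ * μ)) ^ 2
          = β⁻¹ ^ 2 * ((1 - a) * ((m:ℝ) * μ ^ 2) + a * ((m:ℝ) * μ) ^ 2) := by ring
        _ ≤ 1 := key
    · intro j
      simp only [Option.elim, Pi.smul_apply, Pi.add_apply, smul_eq_mul, Pi.single_apply]
      have : (0:ℝ) ≤ μ + ρ * (if j = i then (1:ℝ) else 0) := by
        split <;> [nlinarith; simp [hμ]]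
      positivity
    · simp only [Option.elim, Set.mem_setOf_eq]
      rw [quadForm]
      have hval : ∀ j, (β⁻¹ • ((fun _ : Fin m => μ) + ρ • (Pi.single i (1:ℝ) : Fin m → ℝ))) j
          = β⁻¹ * (μ + if j = i then ρ else 0) := by
        intro j
        simp only [Pi.smul_apply, Pi.add_apply, Pi.single_apply, smul_eq_mul, mul_ite,
          mul_one, mul_zero]
      have hsum : ∑ j, (β⁻¹ * (μ + if j = i then ρ else 0)) = β⁻¹ * ((m:ℝ) * μ + ρ) := by
        rw [← Finset.mul_sum]
        congr 1
        rw [Finset.sum_add_distrib, Finset.sum_ite_eq', if_pos (Finset.mem_univ i)]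
        simp [Finset.sum_const, mul_comm]
      have hsumsq : ∑ j, (β⁻¹ * (μ + if j = i then ρ else 0)) ^ 2
          = β⁻¹ ^ 2 * ((m:ℝ) * μ ^ 2 + 2 * μ * ρ + ρ ^ 2) := by
        have : ∀ j : Fin m, (β⁻¹ * (μ + if j = i then ρ else 0)) ^ 2
            = β⁻¹ ^ 2 * (μ ^ 2 + if j = i then 2 * μ * ρ + ρ ^ 2 else 0) := by
          intro j; split <;> ring
        rw [Finset.sum_congr rfl fun j _ => this j, ← Finset.mul_sum]
        congr 1
        rw [Finset.sum_add_distrib, Finset.sum_ite_eq', if_pos (Finset.mem_univ i)]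
        simp [Finset.sum_const, mul_comm]
        ring
      simp only [hval]
      rw [hsum, hsumsq]
      have hX : (1 - a) * ((m:ℝ) * μ ^ 2 + 2 * μ * ρ + ρ ^ 2) + a * ((m:ℝ) * μ + ρ) ^ 2
          ≤ β ^ 2 := by nlinarith [h3]
      have key := div_trick hβ hX
      calc (1 - a) * (β⁻¹ ^ 2 * ((m:ℝ) * μ ^ 2 + 2 * μ * ρ + ρ ^ 2))
            + a * (β⁻¹ * ((m:ℝ) * μ + ρ)) ^ 2
          = β⁻¹ ^ 2 * ((1 - a) * ((m:ℝ) * μ ^ 2 + 2 * μ * ρ + ρ ^ 2)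
            + a * ((m:ℝ) * μ + ρ) ^ 2) := by ring
        _ ≤ 1 := key

lemma h1_case1 {m : ℕ} (a μ ρ : ℝ) (ha0 : 0 ≤ a) (h1a : 0 < 1 - a) (hμ : 0 < μ)
    (hρ : ρ = 1 / (4 * (1 - a) * μ)) :
    ∀ ξ : Fin m → ℝ, (∀ i, 0 ≤ ξ i) →
      (1 - a) * (∑ i, ξ i ^ 2) + a * (∑ i, ξ i) ^ 2 ≤ 1 →
      (∑ i, max (ξ i - μ) 0) ≤ ρ := by
  intro ξ hpos hQ
  have hpt : ∀ i, 4 * μ * max (ξ i - μ) 0 ≤ ξ i ^ 2 := by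
    intro i
    rcases max_cases (ξ i - μ) 0 with ⟨h, _⟩ | ⟨h, _⟩ <;> rw [h]
    · nlinarith [sq_nonneg (ξ i - 2 * μ)]
    · simpa using sq_nonneg (ξ i)
  have hsum : 4 * μ * (∑ i, max (ξ i - μ) 0) ≤ ∑ i, ξ i ^ 2 := by
    rw [Finset.mul_sum]
    exact Finset.sum_le_sum fun i _ => hpt i
  have hQ' : (1 - a) * (∑ i, ξ i ^ 2) ≤ 1 := by
    have h0 : 0 ≤ a * (∑ i, ξ i) ^ 2 := by positivity
    linarith
  rw [hρ, le_div_iff₀ (by positivity)]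
  nlinarith [mul_le_mul_of_nonneg_left hsum h1a.le]

lemma h1_case2 {m : ℕ} (a ρ : ℝ) (ha : 0 < a) (ha1 : a ≤ 1) (hρ : ρ = 1 / Real.sqrt a) :
    ∀ ξ : Fin m → ℝ, (∀ i, 0 ≤ ξ i) →
      (1 - a) * (∑ i, ξ i ^ 2) + a * (∑ i, ξ i) ^ 2 ≤ 1 →
      (∑ i, max (ξ i - 0) 0) ≤ ρ := by
  intro ξ hpos hQ
  have hmax : ∀ i, max (ξ i - 0) 0 = ξ i := by
    intro i; rw [sub_zero, max_eq_left (hpos i)]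
  rw [Finset.sum_congr rfl fun i _ => hmax i]
  set sξ := ∑ i, ξ i with hsξ
  have hsnn : 0 ≤ sξ := Finset.sum_nonneg fun i _ => hpos i
  have h1 : 0 ≤ (1 - a) * (∑ i, ξ i ^ 2) :=
    mul_nonneg (by linarith) (Finset.sum_nonneg fun i _ => sq_nonneg _)
  have haq : a * sξ ^ 2 ≤ 1 := by linarith
  have hr : 0 < Real.sqrt a := Real.sqrt_pos.mpr ha
  have hr2 : Real.sqrt a ^ 2 = a := Real.sq_sqrt ha.le
  rw [hρ, le_div_iff₀ hr]
  nlinarith [mul_nonneg hsnn hr.le, sq_nonneg (sξ * Real.sqrt a)]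

lemma h3_case1 (m a : ℝ) (ha0 : 0 ≤ a) (hm0 : 0 < m) (h1a : 0 < 1 - a) :
    (1 / (4 * (1 - a) * (1 / (2 * ((1 - a) ^ 3 * m + (1 - a) ^ 2 * a * m ^ 2) ^ ((1:ℝ)/4))))) ^ 2
      + 2 * (1 - a + a * m)
        * (1 / (4 * (1 - a) * (1 / (2 * ((1 - a) ^ 3 * m + (1 - a) ^ 2 * a * m ^ 2) ^ ((1:ℝ)/4)))))
        * (1 / (2 * ((1 - a) ^ 3 * m + (1 - a) ^ 2 * a * m ^ 2) ^ ((1:ℝ)/4)))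
      + (a * m ^ 2 + (1 - a) * m)
        * (1 / (2 * ((1 - a) ^ 3 * m + (1 - a) ^ 2 * a * m ^ 2) ^ ((1:ℝ)/4))) ^ 2
      ≤ Real.sqrt ((1/2) * (1 + (1/(1-a)) * (a * m + Real.sqrt ((1 - a) * m + a * m ^ 2)))) ^ 2 := by
  have hD : 0 < (1 - a) ^ 3 * m + (1 - a) ^ 2 * a * m ^ 2 := by
    have h2 : (0:ℝ) ≤ (1 - a) ^ 2 * a * m ^ 2 := by positivity
    have h3 : (0:ℝ) < (1 - a) ^ 3 * m := by positivity
    linarith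
  have hS : 0 < (1 - a) * m + a * m ^ 2 := by
    have h2 : (0:ℝ) ≤ a * m ^ 2 := by positivity
    have h3 : (0:ℝ) < (1 - a) * m := by positivity
    linarith
  obtain ⟨t, htdef⟩ : ∃ x : ℝ, x = ((1 - a) ^ 3 * m + (1 - a) ^ 2 * a * m ^ 2) ^ ((1:ℝ)/4) :=
    ⟨_, rfl⟩
  obtain ⟨s, hsdef⟩ : ∃ x : ℝ, x = Real.sqrt ((1 - a) * m + a * m ^ 2) := ⟨_, rfl⟩
  have ht : 0 < t := htdef ▸ Real.rpow_pos_of_pos hD _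
  have hs : 0 < s := hsdef ▸ Real.sqrt_pos.mpr hS
  have hs2 : s ^ 2 = (1 - a) * m + a * m ^ 2 := hsdef ▸ Real.sq_sqrt hS.le
  have ht2 : t ^ 2 = (1 - a) * s := by
    have e1 : t ^ 2 = ((1 - a) ^ 3 * m + (1 - a) ^ 2 * a * m ^ 2) ^ ((1:ℝ)/2) := by
      rw [htdef, ← Real.rpow_natCast (((1 - a) ^ 3 * m + (1 - a) ^ 2 * a * m ^ 2) ^ ((1:ℝ)/4)) 2,
        ← Real.rpow_mul hD.le]
      norm_num
    have e2 : (1 - a) ^ 3 * m + (1 - a) ^ 2 * a * m ^ 2 = ((1 - a) * s) ^ 2 := by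
      rw [mul_pow, hs2]; ring
    rw [e1, e2, ← Real.rpow_natCast ((1 - a) * s) 2, ← Real.rpow_mul (by positivity)]
    norm_num
  have hA : 0 < (1/2) * (1 + (1/(1-a)) * (a * m + s)) := by
    have : 0 ≤ (1/(1-a)) * (a * m + s) := by positivity
    nlinarith
  rw [← htdef, ← hsdef, Real.sq_sqrt hA.le]
  have hμρ1 : (1 / (4 * (1 - a) * (1 / (2 * t)))) = t / (2 * (1 - a)) := by
    field_simp; ring
  rw [hμρ1]
  have hρsq : (t / (2 * (1 - a))) ^ 2 = s / (4 * (1 - a)) := by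
    rw [div_pow, ht2]; field_simp; ring
  have hρμ : (t / (2 * (1 - a))) * (1 / (2 * t)) = 1 / (4 * (1 - a)) := by
    field_simp; ring
  have hμsq : (1 / (2 * t)) ^ 2 = 1 / (4 * ((1 - a) * s)) := by
    rw [div_pow, ← ht2]; field_simp; ring
  have heq : a * m ^ 2 + (1 - a) * m = s ^ 2 := by rw [hs2]; ring
  have hfinal : s / (4 * (1 - a)) + 2 * (1 - a + a * m) * (1 / (4 * (1 - a)))
      + s ^ 2 * (1 / (4 * ((1 - a) * s))) = (1/2) * (1 + (1/(1-a)) * (a * m + s)) := by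
    field_simp; ring
  refine le_of_eq ?_
  rw [heq]
  linear_combination hρsq + (2 * (1 - a + a * m)) * hρμ + s ^ 2 * hμsq + hfinal

/-- **Proposition (ellipsoid uncertainty).** For `Σ = (1−a)I + aJ` and
`U = {ξ ≥ 0 : ξᵀΣξ ≤ 1}`, with the case-dependent choices of `μ`, `ρ`, `β`:
(i) `Σᵢ (ξᵢ − μ)₊ ≤ ρ` on `U`, so `Û = conv(v₀,…,v_m)` dominates `U`;
(ii) `ρ² + 2(1−a+am)ρμ + (am²+(1−a)m)μ² ≤ β²`, so `(1/β)·vᵢ ∈ U` for all `i`. -/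
theorem stmt14 {m : ℕ} (hm : 2 ≤ m) (a : ℝ) (ha0 : 0 ≤ a) (ha1 : a ≤ 1) :
    let Sig : Matrix (Fin m) (Fin m) ℝ :=
      (1 - a) • (1 : Matrix (Fin m) (Fin m) ℝ) + a • (Matrix.of fun _ _ => (1 : ℝ))
    let U : Set (Fin m → ℝ) := {ξ | (∀ i, 0 ≤ ξ i) ∧ ξ ⬝ᵥ Sig.mulVec ξ ≤ 1}
    let μ : ℝ := if a ≤ (m : ℝ) ^ (-(2 : ℝ) / 3) then
      1 / (2 * ((1 - a) ^ 3 * (m : ℝ) + (1 - a) ^ 2 * a * (m : ℝ) ^ 2) ^ ((1 : ℝ) / 4))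
      else 0
    let ρ : ℝ := if a ≤ (m : ℝ) ^ (-(2 : ℝ) / 3) then 1 / (4 * (1 - a) * μ)
      else 1 / Real.sqrt a
    let β : ℝ := if a ≤ (m : ℝ) ^ (-(2 : ℝ) / 3) then
      Real.sqrt ((1 / 2) * (1 + (1 / (1 - a)) *
        (a * (m : ℝ) + Real.sqrt ((1 - a) * (m : ℝ) + a * (m : ℝ) ^ 2))))
      else 1 / Real.sqrt a
    let v : Option (Fin m) → Fin m → ℝ :=
      fun o => o.elim (fun _ => μ) (fun i => (fun _ => μ) + ρ • (Pi.single i (1 : ℝ) : Fin m → ℝ))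
    let h : (Fin m → ℝ) → Fin m → ℝ := fun ξ i => max (ξ i - μ) 0 + μ
    -- (i)
    (∀ ξ ∈ U, (∑ i, max (ξ i - μ) 0) ≤ ρ) ∧
    (∀ ξ ∈ U, (∀ i, ξ i ≤ h ξ i) ∧ h ξ ∈ convexHull ℝ (Set.range v)) ∧
    -- (ii)
    ρ ^ 2 + 2 * (1 - a + a * (m : ℝ)) * ρ * μ + (a * (m : ℝ) ^ 2 + (1 - a) * (m : ℝ)) * μ ^ 2
      ≤ β ^ 2 ∧
    (∀ i, β⁻¹ • v i ∈ U) := by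
  intro Sig U μ ρ β v h
  have hm1 : (1:ℝ) < m := by exact_mod_cast Nat.lt_of_lt_of_le Nat.one_lt_two hm
  have hm0 : (0:ℝ) < m := by linarith
  by_cases hc : a ≤ (m : ℝ) ^ (-(2 : ℝ) / 3)
  · -- case 1
    have ha : a < 1 := lt_of_le_of_lt hc (Real.rpow_lt_one_of_one_lt_of_neg hm1 (by norm_num))
    have h1a : (0:ℝ) < 1 - a := by linarith
    have hD : 0 < (1 - a) ^ 3 * (m:ℝ) + (1 - a) ^ 2 * a * (m:ℝ) ^ 2 := by
      have h2 : (0:ℝ) ≤ (1 - a) ^ 2 * a * (m:ℝ) ^ 2 := by positivity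
      have h3 : (0:ℝ) < (1 - a) ^ 3 * (m:ℝ) := by positivity
      linarith
    have hS : 0 < (1 - a) * (m:ℝ) + a * (m:ℝ) ^ 2 := by
      have h2 : (0:ℝ) ≤ a * (m:ℝ) ^ 2 := by positivity
      have h3 : (0:ℝ) < (1 - a) * (m:ℝ) := by positivity
      linarith
    have ht : 0 < ((1 - a) ^ 3 * (m:ℝ) + (1 - a) ^ 2 * a * (m:ℝ) ^ 2) ^ ((1:ℝ)/4) :=
      Real.rpow_pos_of_pos hD _
    have hμpos : 0 < 1 / (2 * ((1 - a) ^ 3 * (m:ℝ) + (1 - a) ^ 2 * a * (m:ℝ) ^ 2) ^ ((1:ℝ)/4)) := by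
      positivity
    have hρpos : 0 < 1 / (4 * (1 - a) *
        (1 / (2 * ((1 - a) ^ 3 * (m:ℝ) + (1 - a) ^ 2 * a * (m:ℝ) ^ 2) ^ ((1:ℝ)/4)))) := by
      positivity
    have hs : 0 < Real.sqrt ((1 - a) * (m:ℝ) + a * (m:ℝ) ^ 2) := Real.sqrt_pos.mpr hS
    have hA : 0 < (1/2) * (1 + (1/(1-a)) *
        (a * (m:ℝ) + Real.sqrt ((1 - a) * (m:ℝ) + a * (m:ℝ) ^ 2))) := by
      have : 0 ≤ (1/(1-a)) * (a * (m:ℝ) + Real.sqrt ((1 - a) * (m:ℝ) + a * (m:ℝ) ^ 2)) := by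
        positivity
      nlinarith
    have hβpos : 0 < Real.sqrt ((1/2) * (1 + (1/(1-a)) *
        (a * (m:ℝ) + Real.sqrt ((1 - a) * (m:ℝ) + a * (m:ℝ) ^ 2)))) := Real.sqrt_pos.mpr hA
    simp only [Sig, U, μ, ρ, β, v, h, if_pos hc]
    exact stmt14_aux a ha0 ha1 _ _ _ hμpos.le hρpos hβpos
      (h1_case1 a _ _ ha0 h1a hμpos rfl) (h3_case1 (m:ℝ) a ha0 hm0 h1a)
  · -- case 2
    have hapos : 0 < a := lt_of_le_of_lt (Real.rpow_nonneg hm0.le _) (not_le.mp hc)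
    have hr : 0 < Real.sqrt a := Real.sqrt_pos.mpr hapos
    have hρpos : 0 < 1 / Real.sqrt a := by positivity
    simp only [Sig, U, μ, ρ, β, v, h, if_neg hc]
    exact stmt14_aux a ha0 ha1 _ _ _ le_rfl hρpos hρpos
      (h1_case2 a _ hapos ha1 rfl) (by simp)
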